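/- Let n, k ∈ ℕ with k ≤ n, and let 0 < p < 1 and 0 < φ < 1 be real numbers satisfying p ≥ k/n + √(2n·log(1/φ))/n. Then for any nonempty family ℱ of k-element subsets of [n], we have μ_p(ℱ↑) > (1 − φ)·|ℱ|/C(n,k). -/

import Mathlib

open scoped Classical

/-- The `p`-biased measure of a family of subsets of `[n]`:
`μ_p(ℱ) = Σ_{x ∈ ℱ} p^|x| (1-p)^(n-|x|)`. -/
noncomputable def biasedMeasure (n : ℕ) (p : ℝ) (F : Finset (Finset (Fin n))) : ℝ :=
  ∑ x ∈ F, p ^ x.card * (1 - p) ^ (n - x.card)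

/-- The up-closure (smallest increasing family containing `ℱ`):
`ℱ↑ = {y ⊆ [n] : x ⊆ y for some x ∈ ℱ}`. -/
noncomputable def upClosure (n : ℕ) (F : Finset (Finset (Fin n))) : Finset (Finset (Fin n)) :=
  Finset.univ.filter (fun y => ∃ x ∈ F, x ⊆ y)


lemma exp_neg_le_quadratic {t : ℝ} (ht : 0 ≤ t) :
    Real.exp (-t) ≤ 1 - t + t ^ 2 / 2 := by
  have hmono : MonotoneOn (fun x => 1 - x + x ^ 2 / 2 - Real.exp (-x)) (Set.Ici (0:ℝ)) := by
    apply monotoneOn_of_deriv_nonneg (convex_Ici 0)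
    · fun_prop
    · fun_prop
    · intro x hx
      have hd : HasDerivAt (fun x : ℝ => 1 - x + x ^ 2 / 2 - Real.exp (-x))
          (0 - 1 + (2 * x ^ 1 * 1) / 2 - (Real.exp (-x) * (-1))) x := by
        have h1 : HasDerivAt (fun x : ℝ => Real.exp (-x)) (Real.exp (-x) * (-1)) x := by
          exact (Real.hasDerivAt_exp (-x)).comp x (hasDerivAt_neg x)
        have h2 : HasDerivAt (fun x : ℝ => x ^ 2) (2 * x ^ 1 * 1) x := by
          simpa using (hasDerivAt_pow 2 x)
        exact (((hasDerivAt_const x (1:ℝ)).sub (hasDerivAt_id x)).add (h2.div_const 2)).sub h1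
      rw [hd.deriv]
      have := Real.add_one_le_exp (-x)
      simp at hx ⊢
      nlinarith [Real.exp_pos (-x)]
  have h0 := hmono (Set.self_mem_Ici) ht ht
  simp only [Real.exp_zero] at h0
  norm_num at h0
  linarith



lemma chernoff (n k : ℕ) (hk1 : 1 ≤ k) (hk : k ≤ n) (p φ : ℝ)
    (hp0 : 0 < p) (hp1 : p < 1) (hφ0 : 0 < φ) (hφ1 : φ < 1)
    (hpk : (k : ℝ) / n + Real.sqrt (2 * n * Real.log (1 / φ)) / n ≤ p) :
    ∑ m ∈ Finset.range k, (n.choose m : ℝ) * p ^ m * (1 - p) ^ (n - m) < φ := by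
  have hn : 0 < n := lt_of_lt_of_le hk1 hk
  have hnR : (0:ℝ) < n := by exact_mod_cast hn
  set L := Real.log (1 / φ) with hL
  have hLφ : Real.exp (-L) = φ := by
    rw [hL, Real.log_div one_ne_zero hφ0.ne', Real.log_one]
    simp [Real.exp_log hφ0]
  have hLpos : 0 < L := Real.log_pos (by rw [lt_div_iff₀ hφ0]; linarith)
  set t := Real.sqrt (2 * L / n) with ht
  have htpos : 0 < t := Real.sqrt_pos.2 (by positivity)
  have hsq : (n:ℝ) * t ^ 2 = 2 * L := by
    rw [ht, Real.sq_sqrt (by positivity)]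
    field_simp
  have hrewrite : Real.sqrt (2 * n * L) / n = t := by
    have h1 : 2 * (n:ℝ) * L = n ^ 2 * (2 * L / n) := by field_simp
    rw [h1, Real.sqrt_mul (by positivity), Real.sqrt_sq hnR.le, ← ht]
    field_simp
  have hkb : (k : ℝ) ≤ n * p - n * t := by
    rw [hrewrite] at hpk
    have h2 : (k : ℝ) / n ≤ p - t := by linarith
    calc (k:ℝ) = n * ((k:ℝ)/n) := by field_simp
      _ ≤ n * (p - t) := by apply mul_le_mul_of_nonneg_left h2 hnR.le
      _ = n * p - n * t := by ring
  set q := 1 - p with hq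
  have hq0 : 0 < q := by rw [hq]; linarith
  clear_value L
  clear hL hrewrite hpk
  have step1 : ∑ m ∈ Finset.range k, (n.choose m : ℝ) * p ^ m * q ^ (n - m)
      ≤ Real.exp (t * (k - 1)) *
        ∑ m ∈ Finset.range k, (n.choose m : ℝ) * (p * Real.exp (-t)) ^ m * q ^ (n - m) := by
    rw [Finset.mul_sum]
    apply Finset.sum_le_sum
    intro m hm
    have hmk : (m : ℝ) ≤ (k : ℝ) - 1 := by
      have h3 : m + 1 ≤ k := Finset.mem_range.1 hm
      have h4 : (m:ℝ) + 1 ≤ k := by exact_mod_cast h3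
      linarith
    have hfac : (1:ℝ) ≤ Real.exp (t * ((k:ℝ) - 1) - t * m) := by
      apply Real.one_le_exp
      nlinarith
    have hrhs : Real.exp (t * ((k:ℝ)-1)) * ((n.choose m : ℝ) * (p * Real.exp (-t)) ^ m * q ^ (n - m))
        = Real.exp (t * ((k:ℝ) - 1) - t * m) * ((n.choose m : ℝ) * p ^ m * q ^ (n - m)) := by
      rw [mul_pow, ← Real.exp_nat_mul,
        show t * ((k:ℝ) - 1) - t * m = t * ((k:ℝ) - 1) + (m * -t) by ring, Real.exp_add]
      ring
    rw [hrhs]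
    nlinarith [mul_nonneg (mul_nonneg (Nat.cast_nonneg (n.choose m)) (pow_nonneg hp0.le m))
      (pow_nonneg hq0.le (n - m))]
  have step2 : ∑ m ∈ Finset.range k, (n.choose m : ℝ) * (p * Real.exp (-t)) ^ m * q ^ (n - m)
      ≤ (p * Real.exp (-t) + q) ^ n := by
    have hexpand : (p * Real.exp (-t) + q) ^ n
        = ∑ m ∈ Finset.range (n + 1), (n.choose m : ℝ) * (p * Real.exp (-t)) ^ m * q ^ (n - m) := by
      rw [add_pow]
      apply Finset.sum_congr rfl
      intros; ring
    rw [hexpand]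
    apply Finset.sum_le_sum_of_subset_of_nonneg
    · exact Finset.range_subset_range.2 (by omega)
    · intro m _ _
      positivity
  have step3 : (p * Real.exp (-t) + q) ^ n ≤ Real.exp (-p * t + t ^ 2 / 2) ^ n := by
    apply pow_le_pow_left₀ (by positivity)
    have h1 : p * Real.exp (-t) ≤ p * (1 - t + t ^ 2 / 2) :=
      mul_le_mul_of_nonneg_left (exp_neg_le_quadratic htpos.le) hp0.le
    have h2 : p * (1 - t + t ^ 2 / 2) + q ≤ 1 + (-p * t + t ^ 2 / 2) := by
      have h5 : p * (t^2/2) ≤ t^2/2 := by nlinarith [sq_nonneg t]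
      rw [hq]; nlinarith
    calc p * Real.exp (-t) + q ≤ 1 + (-p * t + t ^ 2 / 2) := by linarith
      _ ≤ Real.exp (-p * t + t ^ 2 / 2) := by
          have := Real.add_one_le_exp (-p * t + t ^ 2 / 2); linarith
  have final : Real.exp (t * ((k:ℝ) - 1)) * Real.exp (-p * t + t ^ 2 / 2) ^ n < φ := by
    rw [← Real.exp_nat_mul, ← Real.exp_add]
    have hexp : t * ((k:ℝ) - 1) + n * (-p * t + t ^ 2 / 2) ≤ -L - t := by
      have h1 : t * (k:ℝ) ≤ t * ((n:ℝ) * p - n * t) := mul_le_mul_of_nonneg_left hkb htpos.le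
      nlinarith
    calc Real.exp (t * ((k:ℝ) - 1) + n * (-p * t + t ^ 2 / 2)) ≤ Real.exp (-L - t) :=
          Real.exp_le_exp.2 hexp
      _ < Real.exp (-L) := Real.exp_lt_exp.2 (by linarith)
      _ = φ := hLφ
  calc ∑ m ∈ Finset.range k, (n.choose m : ℝ) * p ^ m * q ^ (n - m)
      ≤ Real.exp (t * ((k:ℝ) - 1)) *
        ∑ m ∈ Finset.range k, (n.choose m : ℝ) * (p * Real.exp (-t)) ^ m * q ^ (n - m) := step1
    _ ≤ Real.exp (t * ((k:ℝ) - 1)) * (p * Real.exp (-t) + q) ^ n :=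
        mul_le_mul_of_nonneg_left step2 (Real.exp_pos _).le
    _ ≤ Real.exp (t * ((k:ℝ) - 1)) * Real.exp (-p * t + t ^ 2 / 2) ^ n :=
        mul_le_mul_of_nonneg_left step3 (Real.exp_pos _).le
    _ < φ := final


lemma card_supersets {n k m : ℕ} (x : Finset (Fin n)) (hx : x.card = k) (hkm : k ≤ m) :
    ((Finset.powersetCard m (Finset.univ : Finset (Fin n))).filter (fun y => x ⊆ y)).card
      = (n - k).choose (m - k) := by
  have hc : xᶜ.card = n - k := by rw [Finset.card_compl, hx]; simp
  rw [← hc, ← Finset.card_powersetCard (m - k) xᶜ]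
  apply Finset.card_nbij' (fun y => y \ x) (fun z => z ∪ x)
  · intro y hy
    simp only [Finset.mem_coe, Finset.mem_filter, Finset.mem_powersetCard] at hy ⊢
    obtain ⟨⟨-, hcard⟩, hsub⟩ := hy
    constructor
    · intro a ha
      simp only [Finset.mem_compl]
      simp only [Finset.mem_sdiff] at ha
      exact ha.2
    · rw [Finset.card_sdiff_of_subset hsub, hcard, hx]
  · intro z hz
    rw [Finset.mem_coe, Finset.mem_powersetCard] at hz
    obtain ⟨hsub, hcard⟩ := hz
    have hdisj : Disjoint z x := by
      rw [Finset.disjoint_right]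
      intro a hax haz
      have := hsub haz
      simp only [Finset.mem_compl] at this
      exact this hax
    simp only [Finset.mem_coe, Finset.mem_filter, Finset.mem_powersetCard]
    refine ⟨⟨Finset.subset_univ _, ?_⟩, Finset.subset_union_right⟩
    rw [Finset.card_union_of_disjoint hdisj, hcard, hx, Nat.sub_add_cancel hkm]
  · intro y hy
    simp only [Finset.mem_coe, Finset.mem_filter] at hy
    exact Finset.sdiff_union_of_subset hy.2
  · intro z hz
    simp only [Finset.mem_coe, Finset.mem_powersetCard] at hz
    have hdisj : Disjoint z x := by
      rw [Finset.disjoint_right]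
      intro a hax haz
      have := hz.1 haz
      simp only [Finset.mem_compl] at this
      exact this hax
    dsimp only
    rw [Finset.union_sdiff_distrib, Finset.sdiff_self, Finset.union_empty,
      Finset.sdiff_eq_self_of_disjoint hdisj]

lemma counting (n k m : ℕ) (hkm : k ≤ m) (hm : m ≤ n) (F : Finset (Finset (Fin n)))
    (hF : ∀ x ∈ F, x.card = k) :
    F.card * n.choose m ≤ ((upClosure n F).filter (fun y => y.card = m)).card * n.choose k := by
  set A := Finset.powersetCard m (Finset.univ : Finset (Fin n)) with hA
  set G := (upClosure n F).filter (fun y => y.card = m) with hG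
  have key : F.card * (n - k).choose (m - k) ≤ G.card * m.choose k := by
    have hsum : ∑ y ∈ A, (F.filter (· ⊆ y)).card = F.card * (n - k).choose (m - k) := by
      have h1 : ∀ y, (F.filter (· ⊆ y)).card = ∑ x ∈ F, if x ⊆ y then 1 else 0 := by
        intro y; rw [Finset.card_filter]
      simp_rw [h1]
      rw [Finset.sum_comm]
      have h2 : ∀ x ∈ F, (∑ y ∈ A, if x ⊆ y then 1 else 0) = (n - k).choose (m - k) := by
        intro x hxF
        rw [← Finset.card_filter]
        exact card_supersets x (hF x hxF) hkm
      rw [Finset.sum_congr rfl h2, Finset.sum_const, smul_eq_mul]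
    -- terms vanish outside G, and G ⊆ A
    have hGA : G ⊆ A := by
      intro y hy
      simp only [hG, Finset.mem_filter] at hy
      rw [hA, Finset.mem_powersetCard]
      exact ⟨Finset.subset_univ _, hy.2⟩
    have hzero : ∀ y ∈ A, y ∉ G → (F.filter (· ⊆ y)).card = 0 := by
      intro y hyA hyG
      rw [Finset.card_eq_zero, Finset.filter_eq_empty_iff]
      intro x hxF hsub
      apply hyG
      simp only [hG, Finset.mem_filter, upClosure, Finset.mem_univ, true_and]
      rw [hA, Finset.mem_powersetCard] at hyA
      exact ⟨⟨x, hxF, hsub⟩, hyA.2⟩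
    have hbound : ∀ y ∈ G, (F.filter (· ⊆ y)).card ≤ m.choose k := by
      intro y hy
      simp only [hG, Finset.mem_filter] at hy
      calc (F.filter (· ⊆ y)).card ≤ (Finset.powersetCard k y).card := by
            apply Finset.card_le_card
            intro x hxmem
            simp only [Finset.mem_filter] at hxmem
            rw [Finset.mem_powersetCard]
            exact ⟨hxmem.2, hF x hxmem.1⟩
        _ = m.choose k := by rw [Finset.card_powersetCard, hy.2]
    calc F.card * (n - k).choose (m - k) = ∑ y ∈ A, (F.filter (· ⊆ y)).card := hsum.symm
      _ = ∑ y ∈ G, (F.filter (· ⊆ y)).card := (Finset.sum_subset hGA (hzero)).symm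
      _ ≤ ∑ y ∈ G, m.choose k := Finset.sum_le_sum hbound
      _ = G.card * m.choose k := by rw [Finset.sum_const, smul_eq_mul]
  have hid := Nat.choose_mul (n := n) hkm  -- n.choose m * m.choose k = n.choose k * (n-k).choose (m-k)
  have hpos : 0 < m.choose k := Nat.choose_pos hkm
  have := Nat.mul_le_mul_right (n.choose k) key
  -- F.card * (n-k).choose (m-k) * n.choose k ≤ G.card * m.choose k * n.choose k
  have h3 : F.card * n.choose m * m.choose k ≤ G.card * n.choose k * m.choose k := by
    calc F.card * n.choose m * m.choose k = F.card * ((n - k).choose (m - k)) * n.choose k := by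
          rw [mul_assoc, hid]; ring
      _ ≤ G.card * m.choose k * n.choose k := this
      _ = G.card * n.choose k * m.choose k := by ring
  exact Nat.le_of_mul_le_mul_right h3 hpos

theorem biased_measure_upClosure_lower_bound (n k : ℕ) (hk : k ≤ n) (p φ : ℝ)
    (hp0 : 0 < p) (hp1 : p < 1) (hφ0 : 0 < φ) (hφ1 : φ < 1)
    (hpk : (k : ℝ) / n + Real.sqrt (2 * n * Real.log (1 / φ)) / n ≤ p)
    (F : Finset (Finset (Fin n))) (hF : ∀ x ∈ F, x.card = k) (hne : F.Nonempty) :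
    (1 - φ) * (F.card : ℝ) / (n.choose k : ℝ) < biasedMeasure n p (upClosure n F) := by
  classical
  set G := upClosure n F with hG
  set q := 1 - p with hq
  have hq0 : 0 < q := by rw [hq]; linarith
  set C : ℝ := (n.choose k : ℝ) with hC
  have hCpos : (0:ℝ) < C := by
    rw [hC]; exact_mod_cast Nat.choose_pos hk
  set N : ℕ → ℝ := fun m => ((G.filter (fun y => y.card = m)).card : ℝ) with hN
  -- Step A: biasedMeasure ≥ sum over Icc k n of fibers
  have stepA : ∑ m ∈ Finset.Icc k n, N m * p ^ m * q ^ (n - m) ≤ biasedMeasure n p G := by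
    have heq : ∀ m ∈ Finset.Icc k n, N m * p ^ m * q ^ (n - m)
        = ∑ y ∈ G.filter (fun y => y.card = m), p ^ y.card * q ^ (n - y.card) := by
      intro m _
      rw [Finset.sum_congr rfl (fun y hy => ?_), Finset.sum_const, hN, nsmul_eq_mul, mul_assoc]
      have : y.card = m := (Finset.mem_filter.1 hy).2
      rw [this]
    rw [Finset.sum_congr rfl heq, ← Finset.sum_biUnion]
    · apply Finset.sum_le_sum_of_subset_of_nonneg
      · intro y hy
        rcases Finset.mem_biUnion.1 hy with ⟨m, -, hm⟩
        exact (Finset.mem_filter.1 hm).1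
      · intro y _ _
        positivity
    · intro a _ b _ hab
      rw [Function.onFun, Finset.disjoint_left]
      intro y h1 h2
      exact hab ((Finset.mem_filter.1 h1).2 ▸ (Finset.mem_filter.1 h2).2 ▸ rfl)
  -- Step B: pointwise lower bound on fibers via counting
  have stepB : ∑ m ∈ Finset.Icc k n, (F.card : ℝ) / C * ((n.choose m : ℝ) * p ^ m * q ^ (n - m))
      ≤ ∑ m ∈ Finset.Icc k n, N m * p ^ m * q ^ (n - m) := by
    apply Finset.sum_le_sum
    intro m hm
    rw [Finset.mem_Icc] at hm
    have hc := counting n k m hm.1 hm.2 F hF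
    have h1 : (F.card : ℝ) * (n.choose m : ℝ) / C ≤ N m := by
      rw [div_le_iff₀ hCpos]
      simp only [hN, hC]
      rw [← hG] at hc
      exact_mod_cast hc
    calc (F.card : ℝ) / C * ((n.choose m : ℝ) * p ^ m * q ^ (n - m))
        = ((F.card : ℝ) * (n.choose m : ℝ) / C) * (p ^ m * q ^ (n - m)) := by ring
      _ ≤ N m * (p ^ m * q ^ (n - m)) := mul_le_mul_of_nonneg_right h1 (by positivity)
      _ = N m * p ^ m * q ^ (n - m) := by ring
  -- The binomial tail bound
  have hT : ∑ m ∈ Finset.range k, (n.choose m : ℝ) * p ^ m * q ^ (n - m) < φ := by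
    rcases Nat.eq_zero_or_pos k with h0 | h1
    · subst h0; simpa using hφ0
    · exact chernoff n k h1 hk p φ hp0 hp1 hφ0 hφ1 hpk
  -- splitting the binomial sum
  have hsplit : ∑ m ∈ Finset.range k, (n.choose m : ℝ) * p ^ m * q ^ (n - m)
      + ∑ m ∈ Finset.Icc k n, (n.choose m : ℝ) * p ^ m * q ^ (n - m) = 1 := by
    have h := Finset.sum_range_add_sum_Ico (fun m => (n.choose m : ℝ) * p ^ m * q ^ (n - m))
      (Nat.le_succ_of_le hk)
    rw [Nat.succ_eq_add_one, Finset.Ico_add_one_right_eq_Icc] at h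
    rw [h]
    have hpq : p + q = 1 := by rw [hq]; ring
    calc ∑ m ∈ Finset.range (n + 1), (n.choose m : ℝ) * p ^ m * q ^ (n - m) = (p + q) ^ n := by
          rw [add_pow]
          exact Finset.sum_congr rfl fun m _ => by ring
      _ = 1 := by rw [hpq, one_pow]
  have hFpos : (0:ℝ) < (F.card : ℝ) := by exact_mod_cast hne.card_pos
  have hfactor : ∑ m ∈ Finset.Icc k n, (F.card : ℝ) / C * ((n.choose m : ℝ) * p ^ m * q ^ (n - m))
      = (F.card : ℝ) / C * (1 - ∑ m ∈ Finset.range k, (n.choose m : ℝ) * p ^ m * q ^ (n - m)) := by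
    rw [← Finset.mul_sum]
    congr 1
    linarith
  calc (1 - φ) * (F.card : ℝ) / C
      < (F.card : ℝ) / C * (1 - ∑ m ∈ Finset.range k, (n.choose m : ℝ) * p ^ m * q ^ (n - m)) := by
        have hpos : (0:ℝ) < (F.card : ℝ) / C := by positivity
        have : (1 - φ) * (F.card : ℝ) / C = (F.card : ℝ) / C * (1 - φ) := by ring
        rw [this]
        exact mul_lt_mul_of_pos_left (by linarith) hpos
    _ = ∑ m ∈ Finset.Icc k n, (F.card : ℝ) / C * ((n.choose m : ℝ) * p ^ m * q ^ (n - m)) :=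
        hfactor.symm
    _ ≤ ∑ m ∈ Finset.Icc k n, N m * p ^ m * q ^ (n - m) := stepB
    _ ≤ biasedMeasure n p G := stepA
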